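/- With ρₙ as in the continuous counterexample (ρₙ(x) = Mₙ/(x(log(1/x))^α) on [1/n, 1/2], zero elsewhere, 1 < α < 2), the Shannon entropy S[ρₙ] = −∫ ρₙ log ρₙ dx satisfies S[ρₙ] = −Θ((log n)^{2−α}) → −∞ as n → ∞, even though ρₙ converges in L¹ to a density ρ and sup_n ∫(ρₙ)ᵖ dx < ∞ for every 0 < p ≤ 1. -/

import Mathlib

open MeasureTheory Filter Set

noncomputable section

/-- The normalizing constant `Mₙ`. -/
def Mn (α : ℝ) (n : ℕ) : ℝ :=
  ((α - 1)⁻¹ * (Real.log 2 ^ (1 - α) - Real.log n ^ (1 - α)))⁻¹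

/-- The limiting normalizing constant `M`. -/
def Mlim (α : ℝ) : ℝ := ((α - 1)⁻¹ * Real.log 2 ^ (1 - α))⁻¹

/-- The density `ρₙ` on `(0, 1/2]`, vanishing on `(0, 1/n)`. -/
def ρn (α : ℝ) (n : ℕ) (x : ℝ) : ℝ :=
  if 1 / (n : ℝ) ≤ x then Mn α n / (x * Real.log (1 / x) ^ α) else 0

/-- The limiting density `ρ` on `(0, 1/2]`. -/
def ρlim (α : ℝ) (x : ℝ) : ℝ := Mlim α / (x * Real.log (1 / x) ^ α)

/-- The Shannon entropy of `ρₙ`. -/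
def Sent (α : ℝ) (n : ℕ) : ℝ :=
  -∫ x in Ioc (0 : ℝ) (1 / 2), ρn α n x * Real.log (ρn α n x)

lemma logx_pos {x : ℝ} (hx : 0 < x) (hx1 : x < 1) : 0 < Real.log (1/x) :=
  Real.log_pos (by rw [lt_div_iff₀ hx]; linarith)

lemma hasDeriv_G (p : ℝ) {x : ℝ} (hx : 0 < x) (hx1 : x < 1) :
    HasDerivAt (fun y => Real.log (1/y) ^ p) (-(p * Real.log (1/x) ^ (p-1) / x)) x := by
  have hlx : 0 < Real.log (1/x) := logx_pos hx hx1
  have h1 : HasDerivAt (fun y : ℝ => 1/y) (-(x^2)⁻¹) x := by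
    simpa [one_div] using hasDerivAt_inv hx.ne'
  have h2 : HasDerivAt (fun y => Real.log (1/y)) (-(x^2)⁻¹ / (1/x)) x :=
    h1.log (by positivity)
  have h3 := h2.rpow_const (p := p) (Or.inl hlx.ne')
  convert h3 using 1
  field_simp

lemma hasDeriv_logL {x : ℝ} (hx : 0 < x) (hx1 : x < 1) :
    HasDerivAt (fun y => Real.log (Real.log (1/y))) (-(1 / (x * Real.log (1/x)))) x := by
  have hlx : 0 < Real.log (1/x) := logx_pos hx hx1
  have h1 : HasDerivAt (fun y : ℝ => 1/y) (-(x^2)⁻¹) x := by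
    simpa [one_div] using hasDerivAt_inv hx.ne'
  have h2 : HasDerivAt (fun y => Real.log (1/y)) (-(x^2)⁻¹ / (1/x)) x :=
    h1.log (by positivity)
  have h3 := h2.log hlx.ne'
  convert h3 using 1
  field_simp

def phi (α u : ℝ) : ℝ := (α-1)⁻¹ * (u^(1-α) * Real.log u) + ((α-1)^2)⁻¹ * u^(1-α)

lemma contAt_L {x : ℝ} (hx : 0 < x) : ContinuousAt (fun y : ℝ => Real.log (1/y)) x :=
  (Real.continuousAt_log (by positivity)).comp (continuousAt_const.div continuousAt_id hx.ne')

lemma mem_cond {a b x : ℝ} (ha : 0 < a) (hab : a ≤ b) (hb : b ≤ 1/2) (hx : x ∈ uIcc a b) :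
    0 < x ∧ x < 1 := by
  rw [uIcc_of_le hab] at hx
  exact ⟨lt_of_lt_of_le ha hx.1, by nlinarith [hx.2]⟩

lemma contAt_i0 (α : ℝ) {x : ℝ} (hx : 0 < x) (hx1 : x < 1) :
    ContinuousAt (fun y : ℝ => (y * Real.log (1/y) ^ α)⁻¹) x := by
  have hL := logx_pos hx hx1
  exact (continuousAt_id.mul ((contAt_L hx).rpow_const (Or.inl hL.ne'))).inv₀
    (mul_pos hx (Real.rpow_pos_of_pos hL α)).ne'

lemma contAt_i1 (α : ℝ) {x : ℝ} (hx : 0 < x) (hx1 : x < 1) :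
    ContinuousAt (fun y : ℝ => Real.log (1/y) ^ (1-α) / y) x := by
  have hL := logx_pos hx hx1
  exact ((contAt_L hx).rpow_const (Or.inl hL.ne')).div continuousAt_id hx.ne'

lemma contAt_i2 (α : ℝ) {x : ℝ} (hx : 0 < x) (hx1 : x < 1) :
    ContinuousAt (fun y : ℝ => Real.log (1/y) ^ (-α) * Real.log (Real.log (1/y)) / y) x := by
  have hL := logx_pos hx hx1
  exact (((contAt_L hx).rpow_const (Or.inl hL.ne')).mul
    ((contAt_L hx).log hL.ne')).div continuousAt_id hx.ne'

lemma int_J0 (α : ℝ) (hα1 : 1 < α) {a b : ℝ} (ha : 0 < a) (hab : a ≤ b) (hb : b ≤ 1/2) :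
    ∫ x in a..b, (x * Real.log (1/x) ^ α)⁻¹
      = (α-1)⁻¹ * Real.log (1/b) ^ (1-α) - (α-1)⁻¹ * Real.log (1/a) ^ (1-α) := by
  apply intervalIntegral.integral_eq_sub_of_hasDerivAt
  · intro x hx
    obtain ⟨hx0, hx1⟩ := mem_cond ha hab hb hx
    have hL := logx_pos hx0 hx1
    have h := (hasDeriv_G (1-α) hx0 hx1).const_mul ((α-1)⁻¹)
    refine h.congr_deriv (Eq.symm ?_)
    rw [show (1-α-1:ℝ) = -α by ring, Real.rpow_neg hL.le]
    have hLa : (0:ℝ) < Real.log (1/x) ^ α := Real.rpow_pos_of_pos hL α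
    have hα : α - 1 ≠ 0 := by linarith
    field_simp
    ring
  · apply ContinuousOn.intervalIntegrable
    intro x hx
    obtain ⟨hx0, hx1⟩ := mem_cond ha hab hb hx
    exact (contAt_i0 α hx0 hx1).continuousWithinAt

lemma int_J1 (α : ℝ) (hα2 : α < 2) {a b : ℝ} (ha : 0 < a) (hab : a ≤ b) (hb : b ≤ 1/2) :
    ∫ x in a..b, Real.log (1/x) ^ (1-α) / x
      = (2-α)⁻¹ * Real.log (1/a) ^ (2-α) - (2-α)⁻¹ * Real.log (1/b) ^ (2-α) := by
  have key : ∫ x in a..b, Real.log (1/x) ^ (1-α) / x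
      = -((2-α)⁻¹ * Real.log (1/b) ^ (2-α)) - -((2-α)⁻¹ * Real.log (1/a) ^ (2-α)) := by
    apply intervalIntegral.integral_eq_sub_of_hasDerivAt
    · intro x hx
      obtain ⟨hx0, hx1⟩ := mem_cond ha hab hb hx
      have hL := logx_pos hx0 hx1
      have h := ((hasDeriv_G (2-α) hx0 hx1).const_mul ((2-α)⁻¹)).neg
      refine h.congr_deriv (Eq.symm ?_)
      rw [show (2-α-1:ℝ) = 1-α by ring]
      have h2α : 2 - α ≠ 0 := by linarith
      field_simp
    · apply ContinuousOn.intervalIntegrable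
      intro x hx
      obtain ⟨hx0, hx1⟩ := mem_cond ha hab hb hx
      exact (contAt_i1 α hx0 hx1).continuousWithinAt
  rw [key]; ring

lemma int_J2 (α : ℝ) (hα1 : 1 < α) {a b : ℝ} (ha : 0 < a) (hab : a ≤ b) (hb : b ≤ 1/2) :
    ∫ x in a..b, Real.log (1/x) ^ (-α) * Real.log (Real.log (1/x)) / x
      = phi α (Real.log (1/b)) - phi α (Real.log (1/a)) := by
  apply intervalIntegral.integral_eq_sub_of_hasDerivAt
  · intro x hx
    obtain ⟨hx0, hx1⟩ := mem_cond ha hab hb hx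
    have hL := logx_pos hx0 hx1
    have h := (((hasDeriv_G (1-α) hx0 hx1).mul (hasDeriv_logL hx0 hx1)).const_mul
      ((α-1)⁻¹)).add ((hasDeriv_G (1-α) hx0 hx1).const_mul (((α-1)^2)⁻¹))
    refine h.congr_deriv (Eq.symm ?_)
    rw [show (1-α-1:ℝ) = -α by ring,
      show (1-α:ℝ) = -α + 1 by ring, Real.rpow_add_one hL.ne']
    have hα : α - 1 ≠ 0 := by linarith
    field_simp
    ring
  · apply ContinuousOn.intervalIntegrable
    intro x hx
    obtain ⟨hx0, hx1⟩ := mem_cond ha hab hb hx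
    exact (contAt_i2 α hx0 hx1).continuousWithinAt





lemma ln2_pos : (0:ℝ) < Real.log 2 := Real.log_pos one_lt_two

lemma logn_gt {n : ℕ} (hn : 3 ≤ n) : Real.log 2 < Real.log n := by
  apply Real.log_lt_log two_pos
  have : (3:ℝ) ≤ (n:ℝ) := by exact_mod_cast hn
  linarith

lemma Dn_pos (α : ℝ) (hα1 : 1 < α) {n : ℕ} (hn : 3 ≤ n) :
    0 < (α - 1)⁻¹ * (Real.log 2 ^ (1 - α) - Real.log n ^ (1 - α)) := by
  have h := Real.rpow_lt_rpow_of_neg ln2_pos (logn_gt hn) (by linarith : (1-α) < 0)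
  have h2 : (0:ℝ) < (α-1)⁻¹ := inv_pos.mpr (by linarith)
  nlinarith

lemma Mn_pos (α : ℝ) (hα1 : 1 < α) {n : ℕ} (hn : 3 ≤ n) : 0 < Mn α n :=
  inv_pos.mpr (Dn_pos α hα1 hn)

lemma Mn_inv (α : ℝ) (n : ℕ) :
    (Mn α n)⁻¹ = (α - 1)⁻¹ * (Real.log 2 ^ (1 - α) - Real.log n ^ (1 - α)) := inv_inv _

lemma Mlim_pos (α : ℝ) (hα1 : 1 < α) : 0 < Mlim α := by
  have h1 : (0:ℝ) < Real.log 2 ^ (1-α) := Real.rpow_pos_of_pos ln2_pos _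
  have h2 : (0:ℝ) < (α-1)⁻¹ := inv_pos.mpr (by linarith)
  unfold Mlim; positivity

lemma Mlim_le_Mn (α : ℝ) (hα1 : 1 < α) {n : ℕ} (hn : 3 ≤ n) : Mlim α ≤ Mn α n := by
  have h1 : (0:ℝ) < Real.log n ^ (1-α) := Real.rpow_pos_of_pos (lt_trans ln2_pos (logn_gt hn)) _
  have h2 : (0:ℝ) < (α-1)⁻¹ := inv_pos.mpr (by linarith)
  unfold Mn Mlim
  apply inv_anti₀ (Dn_pos α hα1 hn)
  nlinarith

lemma Mn_le_M3 (α : ℝ) (hα1 : 1 < α) {n : ℕ} (hn : 3 ≤ n) : Mn α n ≤ Mn α 3 := by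
  have hc : ((3:ℕ):ℝ) = (3:ℝ) := by norm_num
  have hl3 : Real.log 2 < Real.log (3:ℕ) := logn_gt (le_refl 3)
  have h3 : Real.log ((3:ℕ):ℝ) ≤ Real.log n := by
    apply Real.log_le_log (by rw [hc]; norm_num)
    exact_mod_cast hn
  have h' : Real.log n ^ (1-α) ≤ Real.log ((3:ℕ):ℝ) ^ (1-α) :=
    (Real.rpow_le_rpow_iff_of_neg (lt_trans ln2_pos (logn_gt hn))
      (lt_trans ln2_pos hl3) (by linarith : (1-α) < 0)).mpr h3
  have h2 : (0:ℝ) < (α-1)⁻¹ := inv_pos.mpr (by linarith)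
  unfold Mn
  apply inv_anti₀ (Dn_pos α hα1 (le_refl 3))
  nlinarith [mul_le_mul_of_nonneg_left h' h2.le]

lemma tendsto_logn : Tendsto (fun n : ℕ => Real.log n) atTop atTop :=
  Real.tendsto_log_atTop.comp tendsto_natCast_atTop_atTop

lemma tendsto_logn_rpow (q : ℝ) (hq : q < 0) :
    Tendsto (fun n : ℕ => Real.log n ^ q) atTop (nhds 0) := by
  have h := (tendsto_rpow_neg_atTop (by linarith : 0 < -q)).comp tendsto_logn
  simpa [Function.comp_def] using h

lemma tendsto_Mn (α : ℝ) (hα1 : 1 < α) :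
    Tendsto (fun n : ℕ => Mn α n) atTop (nhds (Mlim α)) := by
  have h1 : Tendsto (fun n : ℕ => (α - 1)⁻¹ * (Real.log 2 ^ (1 - α) - Real.log n ^ (1 - α)))
      atTop (nhds ((α-1)⁻¹ * Real.log 2 ^ (1-α))) := by
    have := (tendsto_const_nhds (x := Real.log 2 ^ (1-α)) (f := atTop (α := ℕ))).sub
      (tendsto_logn_rpow (1-α) (by linarith))
    simpa using tendsto_const_nhds.mul this
  have hne : (α-1)⁻¹ * Real.log 2 ^ (1-α) ≠ 0 := by
    have hp : (0:ℝ) < Real.log 2 ^ (1-α) := Real.rpow_pos_of_pos ln2_pos _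
    have hq : (0:ℝ) < (α-1)⁻¹ := inv_pos.mpr (by linarith)
    positivity
  exact h1.inv₀ hne







lemma inv_n_pos {n : ℕ} (hn : 3 ≤ n) : (0:ℝ) < 1/(n:ℝ) := by
  have : (0:ℝ) < n := by exact_mod_cast lt_of_lt_of_le (by norm_num : 0 < 3) hn
  positivity

lemma inv_n_le {n : ℕ} (hn : 3 ≤ n) : 1/(n:ℝ) ≤ 1/2 := by
  have : (2:ℝ) ≤ n := by exact_mod_cast le_trans (by norm_num) hn
  apply one_div_le_one_div_of_le <;> linarith

lemma setint_ite (n : ℕ) (hn : 3 ≤ n) (g : ℝ → ℝ) :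
    ∫ x in Ioc (0:ℝ) (1/2), (if 1/(n:ℝ) ≤ x then g x else 0)
      = ∫ x in (1/(n:ℝ))..(1/2), g x := by
  have hn0 := inv_n_pos hn
  have hn2 := inv_n_le hn
  have h1 : (fun x => if 1/(n:ℝ) ≤ x then g x else 0) = Set.indicator (Ici (1/(n:ℝ))) g := by
    funext x; simp [Set.indicator_apply, mem_Ici]
  rw [h1, setIntegral_indicator measurableSet_Ici]
  have h2 : Ioc (0:ℝ) (1/2) ∩ Ici (1/(n:ℝ)) = Icc (1/(n:ℝ)) (1/2) := by
    ext x
    simp only [mem_inter_iff, mem_Ioc, mem_Ici, mem_Icc]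
    constructor
    · rintro ⟨⟨_, h2⟩, h3⟩; exact ⟨h3, h2⟩
    · rintro ⟨h1', h2⟩; exact ⟨⟨lt_of_lt_of_le hn0 h1', h2⟩, h1'⟩
  rw [h2, integral_Icc_eq_integral_Ioc, ← intervalIntegral.integral_of_le hn2]

lemma g_eq (α : ℝ) (hα1 : 1 < α) (M : ℝ) (hM : 0 < M) {x : ℝ} (hx0 : 0 < x) (hx1 : x < 1) :
    M / (x * Real.log (1/x)^α) * Real.log (M / (x * Real.log (1/x)^α))
      = (M * Real.log M) * (x * Real.log (1/x)^α)⁻¹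
        + M * (Real.log (1/x)^(1-α)/x)
        - (α*M) * (Real.log (1/x)^(-α) * Real.log (Real.log (1/x)) / x) := by
  have hL := logx_pos hx0 hx1
  have hLα : (0:ℝ) < Real.log (1/x) ^ α := Real.rpow_pos_of_pos hL α
  rw [Real.log_div hM.ne' (by positivity), Real.log_mul hx0.ne' hLα.ne', Real.log_rpow hL]
  have hlogx : Real.log x = -Real.log (1/x) := by rw [one_div, Real.log_inv, neg_neg]
  rw [hlogx]
  have e1 : Real.log (1/x) ^ (1-α) = Real.log (1/x) * (Real.log (1/x)^α)⁻¹ := by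
    rw [show (1-α:ℝ) = 1 + -α by ring, Real.rpow_add hL, Real.rpow_one, Real.rpow_neg hL.le]
  have e2 : Real.log (1/x) ^ (-α) = (Real.log (1/x)^α)⁻¹ := by rw [Real.rpow_neg hL.le]
  rw [e1, e2]
  field_simp
  ring

lemma sent_formula (α : ℝ) (hα1 : 1 < α) (hα2 : α < 2) {n : ℕ} (hn : 3 ≤ n) :
    Sent α n = -(Real.log (Mn α n)
      + Mn α n * ((2-α)⁻¹ * Real.log n ^ (2-α) - (2-α)⁻¹ * Real.log 2 ^ (2-α))
      - α * Mn α n * (phi α (Real.log 2) - phi α (Real.log n))) := by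
  have hn0 := inv_n_pos hn
  have hn2 := inv_n_le hn
  have hMpos := Mn_pos α hα1 hn
  have hrho : (fun x => ρn α n x * Real.log (ρn α n x))
      = (fun x => if 1/(n:ℝ) ≤ x then
          Mn α n / (x * Real.log (1/x)^α) * Real.log (Mn α n / (x * Real.log (1/x)^α))
        else 0) := by
    funext x; unfold ρn; split <;> simp
  unfold Sent
  rw [hrho, setint_ite n hn]
  have hcong : ∫ x in (1/(n:ℝ))..(1/2),
      Mn α n / (x * Real.log (1/x)^α) * Real.log (Mn α n / (x * Real.log (1/x)^α))
      = ∫ x in (1/(n:ℝ))..(1/2),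
        ((Mn α n * Real.log (Mn α n)) * (x * Real.log (1/x)^α)⁻¹
        + Mn α n * (Real.log (1/x)^(1-α)/x)
        - (α * Mn α n) * (Real.log (1/x)^(-α) * Real.log (Real.log (1/x)) / x)) := by
    apply intervalIntegral.integral_congr
    intro x hx
    obtain ⟨hx0, hx1⟩ := mem_cond hn0 hn2 (by norm_num) hx
    exact g_eq α hα1 (Mn α n) hMpos hx0 hx1
  rw [hcong]
  have ii0 : IntervalIntegrable (fun x => (Mn α n * Real.log (Mn α n)) *
      (x * Real.log (1/x)^α)⁻¹) volume (1/(n:ℝ)) (1/2) := by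
    apply ContinuousOn.intervalIntegrable
    intro x hx
    obtain ⟨hx0, hx1⟩ := mem_cond hn0 hn2 (by norm_num) hx
    exact (continuousAt_const.mul (contAt_i0 α hx0 hx1)).continuousWithinAt
  have ii1 : IntervalIntegrable (fun x => Mn α n * (Real.log (1/x)^(1-α)/x))
      volume (1/(n:ℝ)) (1/2) := by
    apply ContinuousOn.intervalIntegrable
    intro x hx
    obtain ⟨hx0, hx1⟩ := mem_cond hn0 hn2 (by norm_num) hx
    exact (continuousAt_const.mul (contAt_i1 α hx0 hx1)).continuousWithinAt
  have ii2 : IntervalIntegrable (fun x => (α * Mn α n) *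
      (Real.log (1/x)^(-α) * Real.log (Real.log (1/x)) / x)) volume (1/(n:ℝ)) (1/2) := by
    apply ContinuousOn.intervalIntegrable
    intro x hx
    obtain ⟨hx0, hx1⟩ := mem_cond hn0 hn2 (by norm_num) hx
    exact (continuousAt_const.mul (contAt_i2 α hx0 hx1)).continuousWithinAt
  rw [intervalIntegral.integral_sub (ii0.add ii1) ii2, intervalIntegral.integral_add ii0 ii1,
    intervalIntegral.integral_const_mul, intervalIntegral.integral_const_mul,
    intervalIntegral.integral_const_mul,
    int_J0 α hα1 hn0 hn2 (by norm_num), int_J1 α hα2 hn0 hn2 (by norm_num),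
    int_J2 α hα1 hn0 hn2 (by norm_num)]
  have c1 : (1:ℝ)/(1/2) = 2 := by norm_num
  have c2 : (1:ℝ)/(1/(n:ℝ)) = (n:ℝ) := one_div_one_div _
  rw [c1, c2]
  have hD : (α-1)⁻¹ * Real.log 2 ^ (1-α) - (α-1)⁻¹ * Real.log (n:ℝ) ^ (1-α)
      = (Mn α n)⁻¹ := by rw [Mn_inv]; ring
  rw [hD]
  have hMne := hMpos.ne'
  field_simp

lemma tendsto_phi (α : ℝ) (hα1 : 1 < α) :
    Tendsto (fun n : ℕ => phi α (Real.log n)) atTop (nhds 0) := by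
  have hα : (0:ℝ) < α - 1 := by linarith
  have t_a : Tendsto (fun u : ℝ => u^(1-α) * Real.log u) atTop (nhds 0) := by
    have ho := (isLittleO_log_rpow_atTop hα).tendsto_div_nhds_zero
    apply ho.congr'
    filter_upwards [eventually_gt_atTop (0:ℝ)] with u hu
    rw [div_eq_mul_inv, ← Real.rpow_neg hu.le, mul_comm]
    norm_num
  have t1 : Tendsto (fun n : ℕ => Real.log n ^ (1-α) * Real.log (Real.log n)) atTop (nhds 0) :=
    t_a.comp tendsto_logn
  have t2 := tendsto_logn_rpow (1-α) (by linarith)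
  have := (tendsto_const_nhds (x := (α-1)⁻¹) (f := atTop (α := ℕ))).mul t1 |>.add
    ((tendsto_const_nhds (x := ((α-1)^2)⁻¹) (f := atTop (α := ℕ))).mul t2)
  simpa [phi] using this

lemma tendsto_A (α : ℝ) (hα2 : α < 2) :
    Tendsto (fun n : ℕ => Real.log n ^ (2-α)) atTop atTop :=
  (tendsto_rpow_atTop (by linarith : (0:ℝ) < 2-α)).comp tendsto_logn

lemma tendsto_ratio (α : ℝ) (hα1 : 1 < α) (hα2 : α < 2) :
    Tendsto (fun n : ℕ => -Sent α n / Real.log n ^ (2-α)) atTop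
      (nhds (Mlim α * (2-α)⁻¹)) := by
  have t1 := tendsto_Mn α hα1
  have t2 : Tendsto (fun n : ℕ => Real.log (Mn α n)) atTop (nhds (Real.log (Mlim α))) :=
    ((Real.continuousAt_log (Mlim_pos α hα1).ne').tendsto).comp t1
  have t3 := tendsto_phi α hα1
  have tB : Tendsto (fun n : ℕ => Real.log (Mn α n)
      - Mn α n * ((2-α)⁻¹ * Real.log 2 ^ (2-α))
      - α * Mn α n * (phi α (Real.log 2) - phi α (Real.log n))) atTop
      (nhds (Real.log (Mlim α) - Mlim α * ((2-α)⁻¹ * Real.log 2 ^ (2-α))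
        - α * Mlim α * (phi α (Real.log 2) - 0))) :=
    (t2.sub (t1.mul_const _)).sub (((t1.const_mul α)).mul (tendsto_const_nhds.sub t3))
  have tBA := tB.div_atTop (tendsto_A α hα2)
  have tKn : Tendsto (fun n : ℕ => Mn α n * (2-α)⁻¹) atTop (nhds (Mlim α * (2-α)⁻¹)) :=
    t1.mul_const _
  have tsum := tKn.add tBA
  rw [add_zero] at tsum
  apply tsum.congr'
  filter_upwards [eventually_ge_atTop 3] with n hn
  have hA : (0:ℝ) < Real.log n ^ (2-α) :=
    Real.rpow_pos_of_pos (lt_trans ln2_pos (logn_gt hn)) _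
  rw [sent_formula α hα1 hα2 hn]
  field_simp
  ring

lemma part12 (α : ℝ) (hα1 : 1 < α) (hα2 : α < 2) :
    (∃ c C : ℝ, 0 < c ∧ 0 < C ∧ ∃ N : ℕ, ∀ n, N ≤ n →
        c * Real.log n ^ (2 - α) ≤ -Sent α n ∧ -Sent α n ≤ C * Real.log n ^ (2 - α)) ∧
    Tendsto (fun n => Sent α n) atTop atBot := by
  set K := Mlim α * (2-α)⁻¹ with hKdef
  have hKpos : 0 < K := mul_pos (Mlim_pos α hα1) (inv_pos.mpr (by linarith))
  have tratio := tendsto_ratio α hα1 hα2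
  have h1 : ∀ᶠ n : ℕ in atTop, K/2 < -Sent α n / Real.log n ^ (2-α) :=
    tratio.eventually (eventually_gt_nhds (by linarith))
  have h2 : ∀ᶠ n : ℕ in atTop, -Sent α n / Real.log n ^ (2-α) < K+1 :=
    tratio.eventually (eventually_lt_nhds (by linarith))
  constructor
  · obtain ⟨N, hN⟩ := eventually_atTop.mp ((h1.and h2).and (eventually_ge_atTop 3))
    refine ⟨K/2, K+1, by linarith, by linarith, N, fun n hn => ?_⟩
    obtain ⟨⟨hb1, hb2⟩, hn3⟩ := hN n hn
    have hA : (0:ℝ) < Real.log n ^ (2-α) :=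
      Real.rpow_pos_of_pos (lt_trans ln2_pos (logn_gt hn3)) _
    exact ⟨(le_div_iff₀ hA).mp hb1.le, (div_le_iff₀ hA).mp hb2.le⟩
  · have hmono : ∀ᶠ n : ℕ in atTop, Sent α n ≤ -(K/2 * Real.log n ^ (2-α)) := by
      filter_upwards [h1, eventually_ge_atTop 3] with n hb1 hn3
      have hA : (0:ℝ) < Real.log n ^ (2-α) :=
        Real.rpow_pos_of_pos (lt_trans ln2_pos (logn_gt hn3)) _
      have := (le_div_iff₀ hA).mp hb1.le
      linarith
    have htop : Tendsto (fun n : ℕ => K/2 * Real.log n ^ (2-α)) atTop atTop :=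
      (tendsto_A α hα2).const_mul_atTop (by linarith)
    exact tendsto_atBot_mono' atTop hmono (tendsto_neg_atBot_iff.mpr htop)

-- integrability and value of the improper integral of i0

lemma aseq_pos (i : ℕ) : (0:ℝ) < 1/((i:ℝ)+3) := by positivity

lemma aseq_le (i : ℕ) : 1/((i:ℝ)+3) ≤ 1/2 := by
  apply one_div_le_one_div_of_le <;> [norm_num; (push_cast; linarith [Nat.cast_nonneg (α := ℝ) i])]

lemma aseq_tendsto : Tendsto (fun i : ℕ => 1/((i:ℝ)+3)) atTop (nhds 0) := by
  have h : Tendsto (fun i : ℕ => (i:ℝ)+3) atTop atTop :=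
    tendsto_atTop_add_const_right _ 3 tendsto_natCast_atTop_atTop
  simpa [one_div, Pi.inv_def] using h.inv_tendsto_atTop

lemma i0_contOn {a b : ℝ} (ha : 0 < a) (hb : b ≤ 1/2) (α : ℝ) :
    ContinuousOn (fun x : ℝ => (x * Real.log (1/x)^α)⁻¹) (Icc a b) := by
  intro x hx
  have hx0 : 0 < x := lt_of_lt_of_le ha hx.1
  have hx1 : x < 1 := by nlinarith [hx.2]
  exact (contAt_i0 α hx0 hx1).continuousWithinAt

lemma i0_intOn_Ioc_sub (α : ℝ) {a : ℝ} (ha : 0 < a) (hb : a ≤ 1/2) :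
    IntegrableOn (fun x : ℝ => (x * Real.log (1/x)^α)⁻¹) (Ioc a (1/2)) :=
  ((i0_contOn ha (le_refl _) α).integrableOn_Icc).mono_set Ioc_subset_Icc_self

lemma i0_nonneg_on (α : ℝ) {x : ℝ} (hx0 : 0 < x) (hx1 : x < 1) :
    0 ≤ (x * Real.log (1/x)^α)⁻¹ := by
  have hL := logx_pos hx0 hx1
  positivity

lemma i0_setint (α : ℝ) (hα1 : 1 < α) {a : ℝ} (ha : 0 < a) (hb : a ≤ 1/2) :
    ∫ x in Ioc a (1/2), (x * Real.log (1/x)^α)⁻¹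
      = (α-1)⁻¹ * Real.log 2 ^ (1-α) - (α-1)⁻¹ * Real.log (1/a) ^ (1-α) := by
  rw [← intervalIntegral.integral_of_le hb, int_J0 α hα1 ha hb (by norm_num)]
  norm_num

lemma i0_integrableOn (α : ℝ) (hα1 : 1 < α) :
    IntegrableOn (fun x : ℝ => (x * Real.log (1/x)^α)⁻¹) (Ioc (0:ℝ) (1/2)) := by
  apply integrableOn_Ioc_of_intervalIntegral_norm_bounded_left
    (a := fun i : ℕ => 1/((i:ℝ)+3)) (I := (α-1)⁻¹ * Real.log 2 ^ (1-α))
    (fun i => i0_intOn_Ioc_sub α (aseq_pos i) (aseq_le i)) aseq_tendsto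
  apply Eventually.of_forall
  intro i
  have hnorm : ∫ x in Ioc (1/((i:ℝ)+3)) (1/2), ‖(x * Real.log (1/x)^α)⁻¹‖
      = ∫ x in Ioc (1/((i:ℝ)+3)) (1/2), (x * Real.log (1/x)^α)⁻¹ := by
    apply setIntegral_congr_fun measurableSet_Ioc
    intro x hx
    have hx0 : 0 < x := lt_trans (aseq_pos i) hx.1
    have hx1 : x < 1 := by nlinarith [hx.2]
    exact Real.norm_of_nonneg (i0_nonneg_on α hx0 hx1)
  rw [hnorm, i0_setint α hα1 (aseq_pos i) (aseq_le i)]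
  have hla : 0 < Real.log (1/(1/((i:ℝ)+3))) := by
    rw [one_div_one_div]
    apply Real.log_pos
    push_cast
    linarith [Nat.cast_nonneg (α := ℝ) i]
  have : (0:ℝ) < Real.log (1/(1/((i:ℝ)+3))) ^ (1-α) := Real.rpow_pos_of_pos hla _
  have h2 : (0:ℝ) < (α-1)⁻¹ := inv_pos.mpr (by linarith)
  nlinarith

lemma i0_union : (⋃ i : ℕ, Ioc (1/((i:ℝ)+3)) (1/2)) = Ioc (0:ℝ) (1/2) := by
  ext x
  simp only [mem_iUnion, mem_Ioc]
  constructor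
  · rintro ⟨i, h1, h2⟩; exact ⟨lt_trans (aseq_pos i) h1, h2⟩
  · rintro ⟨h1, h2⟩
    obtain ⟨i, hi⟩ := exists_nat_gt (1/x)
    refine ⟨i, ?_, h2⟩
    rw [div_lt_iff₀ (by push_cast; linarith [Nat.cast_nonneg (α := ℝ) i])]
    rw [div_lt_iff₀ h1] at hi
    nlinarith [Nat.cast_nonneg (α := ℝ) i]

lemma i0_value (α : ℝ) (hα1 : 1 < α) :
    ∫ x in Ioc (0:ℝ) (1/2), (x * Real.log (1/x)^α)⁻¹
      = (α-1)⁻¹ * Real.log 2 ^ (1-α) := by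
  have hmono : Monotone (fun i : ℕ => Ioc (1/((i:ℝ)+3)) (1/2)) := by
    intro i j hij
    apply Ioc_subset_Ioc_left
    apply one_div_le_one_div_of_le (by positivity)
    have := (Nat.cast_le (α := ℝ)).mpr hij
    linarith
  have hint := i0_integrableOn α hα1
  have h := tendsto_setIntegral_of_monotone (fun i => measurableSet_Ioc) hmono
    (by rw [i0_union]; exact hint)
  rw [i0_union] at h
  have h2 : Tendsto (fun i : ℕ => ∫ x in Ioc (1/((i:ℝ)+3)) (1/2), (x * Real.log (1/x)^α)⁻¹)
      atTop (nhds ((α-1)⁻¹ * Real.log 2 ^ (1-α))) := by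
    have he : ∀ i : ℕ, ∫ x in Ioc (1/((i:ℝ)+3)) (1/2), (x * Real.log (1/x)^α)⁻¹
        = (α-1)⁻¹ * Real.log 2 ^ (1-α) - (α-1)⁻¹ * Real.log ((i:ℝ)+3) ^ (1-α) := by
      intro i
      rw [i0_setint α hα1 (aseq_pos i) (aseq_le i), one_div_one_div]
    simp only [he]
    have t1 : Tendsto (fun i : ℕ => Real.log ((i:ℝ)+3) ^ (1-α)) atTop (nhds 0) := by
      have hl : Tendsto (fun i : ℕ => Real.log ((i:ℝ)+3)) atTop atTop :=
        Real.tendsto_log_atTop.comp (tendsto_atTop_add_const_right _ 3 tendsto_natCast_atTop_atTop)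
      have := (tendsto_rpow_neg_atTop (by linarith : (0:ℝ) < α-1)).comp hl
      simpa [Function.comp_def, show -(α-1) = 1-α by ring] using this
    have h3 := (tendsto_const_nhds (x := (α-1)⁻¹ * Real.log 2 ^ (1-α)) (f := atTop (α := ℕ))).sub
      ((tendsto_const_nhds (x := (α-1)⁻¹) (f := atTop (α := ℕ))).mul t1)
    simpa using h3
  exact tendsto_nhds_unique h h2

lemma part3 (α : ℝ) (hα1 : 1 < α) :
    (∫ x in Ioc (0 : ℝ) (1 / 2), ρlim α x) = 1 := by
  have h1 : ∀ x : ℝ, ρlim α x = Mlim α * (x * Real.log (1/x)^α)⁻¹ := fun x =>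
    div_eq_mul_inv _ _
  simp only [h1]
  rw [integral_const_mul, i0_value α hα1]
  unfold Mlim
  apply inv_mul_cancel₀
  have hp : (0:ℝ) < Real.log 2 ^ (1-α) := Real.rpow_pos_of_pos ln2_pos _
  have hq : (0:ℝ) < (α-1)⁻¹ := inv_pos.mpr (by linarith)
  positivity

lemma rhon_eq_indicator (α : ℝ) (n : ℕ) :
    ρn α n = Set.indicator (Ici (1/(n:ℝ))) (fun x => Mn α n / (x * Real.log (1/x)^α)) := by
  funext x
  simp [ρn, Set.indicator_apply, mem_Ici]

lemma rhon_aesm (α : ℝ) (n : ℕ) (hn : 3 ≤ n) :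
    AEStronglyMeasurable (ρn α n) (volume.restrict (Ioc (0:ℝ) (1/2))) := by
  rw [rhon_eq_indicator]
  apply AEStronglyMeasurable.indicator ?_ measurableSet_Ici
  have hc : ContinuousOn (fun x : ℝ => Mn α n / (x * Real.log (1/x)^α)) (Ioc (0:ℝ) (1/2)) := by
    intro x hx
    have hx1 : x < 1 := by nlinarith [hx.2]
    exact ((continuousAt_const.mul (contAt_i0 α hx.1 hx1)).congr
      (by filter_upwards with y using (div_eq_mul_inv _ _).symm)).continuousWithinAt
  exact hc.aestronglyMeasurable measurableSet_Ioc

lemma rholim_aesm (α : ℝ) :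
    AEStronglyMeasurable (ρlim α) (volume.restrict (Ioc (0:ℝ) (1/2))) := by
  have hc : ContinuousOn (ρlim α) (Ioc (0:ℝ) (1/2)) := by
    intro x hx
    have hx1 : x < 1 := by nlinarith [hx.2]
    exact ((continuousAt_const.mul (contAt_i0 α hx.1 hx1)).congr
      (by filter_upwards with y using (div_eq_mul_inv _ _).symm)).continuousWithinAt
  exact hc.aestronglyMeasurable measurableSet_Ioc

lemma rhon_nonneg (α : ℝ) (hα1 : 1 < α) {n : ℕ} (hn : 3 ≤ n) {x : ℝ}
    (hx0 : 0 < x) (hx1 : x < 1) : 0 ≤ ρn α n x := by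
  unfold ρn
  split
  · have hL := logx_pos hx0 hx1
    have := (Mn_pos α hα1 hn).le
    positivity
  · exact le_refl 0

lemma rhon_le (α : ℝ) (hα1 : 1 < α) {n : ℕ} (hn : 3 ≤ n) {x : ℝ}
    (hx0 : 0 < x) (hx1 : x < 1) :
    ρn α n x ≤ Mn α 3 * (x * Real.log (1/x)^α)⁻¹ := by
  have hL := logx_pos hx0 hx1
  have hi0 := i0_nonneg_on α hx0 hx1
  unfold ρn
  split
  · rw [div_eq_mul_inv]
    exact mul_le_mul_of_nonneg_right (Mn_le_M3 α hα1 hn) hi0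
  · have := (Mn_pos α hα1 (le_refl 3)).le
    positivity

lemma rhon_integrableOn (α : ℝ) (hα1 : 1 < α) {n : ℕ} (hn : 3 ≤ n) :
    IntegrableOn (ρn α n) (Ioc (0:ℝ) (1/2)) := by
  apply Integrable.mono' (g := fun x => Mn α 3 * (x * Real.log (1/x)^α)⁻¹)
    ((i0_integrableOn α hα1).const_mul _) (rhon_aesm α n hn)
  filter_upwards [ae_restrict_mem measurableSet_Ioc] with x hx
  have hx1 : x < 1 := by nlinarith [hx.2]
  rw [Real.norm_of_nonneg (rhon_nonneg α hα1 hn hx.1 hx1)]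
  exact rhon_le α hα1 hn hx.1 hx1

lemma rhon_mass (α : ℝ) (hα1 : 1 < α) {n : ℕ} (hn : 3 ≤ n) :
    ∫ x in Ioc (0:ℝ) (1/2), ρn α n x = 1 := by
  have hrho : (fun x => ρn α n x)
      = (fun x => if 1/(n:ℝ) ≤ x then Mn α n / (x * Real.log (1/x)^α) else 0) := rfl
  rw [hrho, setint_ite n hn]
  have : ∀ x : ℝ, Mn α n / (x * Real.log (1/x)^α) = Mn α n * (x * Real.log (1/x)^α)⁻¹ :=
    fun x => div_eq_mul_inv _ _
  simp only [this]
  rw [intervalIntegral.integral_const_mul, int_J0 α hα1 (inv_n_pos hn) (inv_n_le hn) (by norm_num),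
    one_div_one_div, one_div_one_div]
  rw [show (α-1)⁻¹ * Real.log 2 ^ (1-α) - (α-1)⁻¹ * Real.log (n:ℝ) ^ (1-α) = (Mn α n)⁻¹
    by rw [Mn_inv]; ring]
  exact mul_inv_cancel₀ (Mn_pos α hα1 hn).ne'

lemma rholim_nonneg (α : ℝ) (hα1 : 1 < α) {x : ℝ} (hx0 : 0 < x) (hx1 : x < 1) :
    0 ≤ ρlim α x := by
  have hL := logx_pos hx0 hx1
  have := (Mlim_pos α hα1).le
  unfold ρlim
  positivity

lemma part4 (α : ℝ) (hα1 : 1 < α) :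
    Tendsto (fun n : ℕ => ∫ x in Ioc (0 : ℝ) (1 / 2), |ρn α n x - ρlim α x|)
      atTop (nhds 0) := by
  rw [← Filter.tendsto_add_atTop_iff_nat 3]
  have key : Tendsto (fun k : ℕ => ∫ x in Ioc (0 : ℝ) (1 / 2), |ρn α (k+3) x - ρlim α x|)
      atTop (nhds (∫ x in Ioc (0 : ℝ) (1 / 2), (0:ℝ))) := by
    apply tendsto_integral_of_dominated_convergence
      (bound := fun x => (Mn α 3 + Mlim α) * (x * Real.log (1/x)^α)⁻¹)
    · intro k
      apply (((rhon_aesm α (k+3) (by omega)).sub (rholim_aesm α)).norm).congr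
      filter_upwards with x using (Real.norm_eq_abs _)
    · exact (i0_integrableOn α hα1).const_mul _
    · intro k
      filter_upwards [ae_restrict_mem measurableSet_Ioc] with x hx
      have hx1 : x < 1 := by nlinarith [hx.2]
      have hi0 := i0_nonneg_on α hx.1 hx1
      have h1 := rhon_nonneg α hα1 (show 3 ≤ k+3 by omega) hx.1 hx1
      have h2 := rholim_nonneg α hα1 hx.1 hx1
      have h3 := rhon_le α hα1 (show 3 ≤ k+3 by omega) hx.1 hx1
      have h4 : ρlim α x ≤ Mlim α * (x * Real.log (1/x)^α)⁻¹ :=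
        le_of_eq (div_eq_mul_inv _ _)
      rw [Real.norm_eq_abs, abs_abs]
      calc |ρn α (k+3) x - ρlim α x| ≤ |ρn α (k+3) x| + |ρlim α x| := abs_sub _ _
        _ = ρn α (k+3) x + ρlim α x := by rw [abs_of_nonneg h1, abs_of_nonneg h2]
        _ ≤ (Mn α 3 + Mlim α) * (x * Real.log (1/x)^α)⁻¹ := by
            rw [add_mul]; exact add_le_add h3 h4
    · filter_upwards [ae_restrict_mem measurableSet_Ioc] with x hx
      have hx1 : x < 1 := by nlinarith [hx.2]
      have hev : ∀ᶠ k : ℕ in atTop, |ρn α (k+3) x - ρlim α x|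
          = |Mn α (k+3) - Mlim α| * (x * Real.log (1/x)^α)⁻¹ := by
        have h0 : Tendsto (fun k : ℕ => 1/((k:ℝ)+3)) atTop (nhds 0) := aseq_tendsto
        filter_upwards [h0.eventually (eventually_le_nhds hx.1)] with k hk
        have hcast : 1/(((k+3:ℕ)):ℝ) ≤ x := by push_cast; exact hk
        have hL := logx_pos hx.1 hx1
        have hxLα : (0:ℝ) < x * Real.log (1/x)^α :=
          mul_pos hx.1 (Real.rpow_pos_of_pos hL α)
        unfold ρn ρlim
        rw [if_pos hcast, div_sub_div_same, abs_div, abs_of_nonneg hxLα.le,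
          div_eq_mul_inv (|Mn α (k+3) - Mlim α|) (x * Real.log (1/x)^α)]
      have tM3 : Tendsto (fun k : ℕ => Mn α (k+3)) atTop (nhds (Mlim α)) :=
        (tendsto_Mn α hα1).comp (tendsto_add_atTop_nat 3)
      have hlim := (((tM3.sub (tendsto_const_nhds (x := Mlim α))).abs).mul_const
        ((x * Real.log (1/x)^α)⁻¹))
      rw [sub_self, abs_zero, zero_mul] at hlim
      exact Filter.Tendsto.congr' (EventuallyEq.symm hev) hlim
  simpa using key

lemma part5 (α : ℝ) (hα1 : 1 < α) (hα2 : α < 2) :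
    ∀ p : ℝ, 0 < p → p ≤ 1 → ∃ Cp : ℝ, ∀ n : ℕ, 3 ≤ n →
        ∫ x in Ioc (0 : ℝ) (1 / 2), ρn α n x ^ p ≤ Cp := by
  intro p hp hp1
  refine ⟨3/2, fun n hn => ?_⟩
  have hconst : IntegrableOn (fun _ : ℝ => (1:ℝ)) (Ioc (0:ℝ) (1/2)) := by
    exact integrableOn_const measure_Ioc_lt_top.ne
  have hInt : IntegrableOn (fun x => 1 + ρn α n x) (Ioc (0:ℝ) (1/2)) :=
    hconst.add (rhon_integrableOn α hα1 hn)
  have hle : ∫ x in Ioc (0:ℝ) (1/2), ρn α n x ^ p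
      ≤ ∫ x in Ioc (0:ℝ) (1/2), (1 + ρn α n x) := by
    refine integral_mono_of_nonneg ?_ hInt ?_
    · filter_upwards [ae_restrict_mem measurableSet_Ioc] with x hx
      have hx1 : x < 1 := by nlinarith [hx.2]
      exact Real.rpow_nonneg (rhon_nonneg α hα1 hn hx.1 hx1) p
    · filter_upwards [ae_restrict_mem measurableSet_Ioc] with x hx
      have hx1 : x < 1 := by nlinarith [hx.2]
      have h0 := rhon_nonneg α hα1 hn hx.1 hx1
      rcases le_or_gt (ρn α n x) 1 with h | h
      · calc ρn α n x ^ p ≤ 1 := Real.rpow_le_one h0 h hp.le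
          _ ≤ 1 + ρn α n x := by linarith
      · calc ρn α n x ^ p ≤ ρn α n x ^ (1:ℝ) :=
              Real.rpow_le_rpow_of_exponent_le h.le hp1
          _ = ρn α n x := Real.rpow_one _
          _ ≤ 1 + ρn α n x := by linarith
  have hval : ∫ x in Ioc (0:ℝ) (1/2), (1 + ρn α n x) = (3:ℝ)/2 := by
    rw [integral_add hconst (rhon_integrableOn α hα1 hn), rhon_mass α hα1 hn,
      setIntegral_const, Real.volume_real_Ioc_of_le (by norm_num), smul_eq_mul]
    norm_num
  linarith

/-- Continuous counterexample: for `1 < α < 2`, the Shannon entropy of `ρₙ` is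
`-Θ((log n)^{2-α})`, hence tends to `-∞`, even though `ρₙ → ρ` in `L¹` (with `ρ` a
probability density) and `sup_n ∫ ρₙᵖ < ∞` for every `0 < p ≤ 1`. -/
theorem stmt7 (α : ℝ) (hα1 : 1 < α) (hα2 : α < 2) :
    (∃ c C : ℝ, 0 < c ∧ 0 < C ∧ ∃ N : ℕ, ∀ n, N ≤ n →
        c * Real.log n ^ (2 - α) ≤ -Sent α n ∧ -Sent α n ≤ C * Real.log n ^ (2 - α)) ∧
    Tendsto (fun n => Sent α n) atTop atBot ∧
    (∫ x in Ioc (0 : ℝ) (1 / 2), ρlim α x) = 1 ∧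
    Tendsto (fun n : ℕ => ∫ x in Ioc (0 : ℝ) (1 / 2), |ρn α n x - ρlim α x|)
      atTop (nhds 0) ∧
    (∀ p : ℝ, 0 < p → p ≤ 1 → ∃ Cp : ℝ, ∀ n : ℕ, 3 ≤ n →
        ∫ x in Ioc (0 : ℝ) (1 / 2), ρn α n x ^ p ≤ Cp) := by
  exact ⟨(part12 α hα1 hα2).1, (part12 α hα1 hα2).2, part3 α hα1, part4 α hα1,
    part5 α hα1 hα2⟩

end
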